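/- Fix probability densities p and q w.r.t. P, both continuous and positive. Among all measurable detectors φ, the function φ*(ω) = (1/2)·ln(p(ω)/q(ω)) minimizes Φ(φ) = ln(∫ e^{−φ} p dP) + ln(∫ e^{φ} q dP), and the minimal value is 2·ln(∫ √(p q) dP). -/

import Mathlib

open MeasureTheory

lemma aux_left (a b : ℝ) (ha : 0 < a) (hb : 0 < b) :
    Real.exp (-((1/2) * Real.log (a/b))) * a = Real.sqrt (a*b) := by
  have hlog : Real.log (b/a) = - Real.log (a/b) := by
    rw [← inv_div a b, Real.log_inv]
  have h1 : -((1/2) * Real.log (a/b)) = Real.log (b/a) * (1/2) := by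
    rw [hlog]; ring
  rw [h1, ← Real.rpow_def_of_pos (by positivity), ← Real.sqrt_eq_rpow]
  rw [show a*b = b/a * a^2 by field_simp, Real.sqrt_mul (by positivity),
    Real.sqrt_sq ha.le]

lemma aux_right (a b : ℝ) (ha : 0 < a) (hb : 0 < b) :
    Real.exp ((1/2) * Real.log (a/b)) * b = Real.sqrt (a*b) := by
  have h1 : (1/2) * Real.log (a/b) = Real.log (a/b) * (1/2) := by ring
  rw [h1, ← Real.rpow_def_of_pos (by positivity), ← Real.sqrt_eq_rpow]
  rw [show a*b = a/b * b^2 by field_simp, Real.sqrt_mul (by positivity),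
    Real.sqrt_sq hb.le]

lemma aux_pos_integral {Ω : Type*} [MeasurableSpace Ω] (P : Measure Ω) (hP : P ≠ 0)
    (f : Ω → ℝ) (hf : ∀ ω, 0 < f ω) (hfi : Integrable f P) :
    0 < ∫ ω, f ω ∂P := by
  rw [integral_pos_iff_support_of_nonneg_ae
    (Filter.Eventually.of_forall fun ω => (hf ω).le) hfi]
  have hs : Function.support f = Set.univ := Set.eq_univ_of_forall fun ω => (hf ω).ne'
  rw [hs]
  exact Measure.measure_univ_pos.mpr hP

/-- The detector φ* = (1/2)ln(p/q) minimizes Φ(φ) = ln ∫ e^{-φ} p + ln ∫ e^{φ} q over all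
measurable detectors (with the relevant integrals finite), and the minimal value is
2 ln ∫ √(pq). -/
theorem optimal_detector_is_half_log_likelihood_ratio
    {Ω : Type*} [TopologicalSpace Ω] [MeasurableSpace Ω] [OpensMeasurableSpace Ω]
    (P : Measure Ω)
    (p q : Ω → ℝ) (hpc : Continuous p) (hqc : Continuous q)
    (hp0 : ∀ ω, 0 < p ω) (hq0 : ∀ ω, 0 < q ω)
    (hpi : Integrable p P) (hqi : Integrable q P)
    (hp1 : ∫ ω, p ω ∂P = 1) (hq1 : ∫ ω, q ω ∂P = 1) :
    (∀ φ : Ω → ℝ, Measurable φ →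
        Integrable (fun ω => Real.exp (-(φ ω)) * p ω) P →
        Integrable (fun ω => Real.exp (φ ω) * q ω) P →
        Real.log (∫ ω, Real.exp (-((1/2) * Real.log (p ω / q ω))) * p ω ∂P)
          + Real.log (∫ ω, Real.exp ((1/2) * Real.log (p ω / q ω)) * q ω ∂P)
        ≤ Real.log (∫ ω, Real.exp (-(φ ω)) * p ω ∂P)
          + Real.log (∫ ω, Real.exp (φ ω) * q ω ∂P))
    ∧ Real.log (∫ ω, Real.exp (-((1/2) * Real.log (p ω / q ω))) * p ω ∂P)
        + Real.log (∫ ω, Real.exp ((1/2) * Real.log (p ω / q ω)) * q ω ∂P)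
      = 2 * Real.log (∫ ω, Real.sqrt (p ω * q ω) ∂P) := by
  have hP : P ≠ 0 := by
    intro h
    rw [h, integral_zero_measure] at hp1
    norm_num at hp1
  -- the two integrands for the optimal detector are both `√(pq)`
  have e1 : (∫ ω, Real.exp (-((1/2) * Real.log (p ω / q ω))) * p ω ∂P)
      = ∫ ω, Real.sqrt (p ω * q ω) ∂P :=
    integral_congr_ae (Filter.Eventually.of_forall fun ω =>
      aux_left (p ω) (q ω) (hp0 ω) (hq0 ω))
  have e2 : (∫ ω, Real.exp ((1/2) * Real.log (p ω / q ω)) * q ω ∂P)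
      = ∫ ω, Real.sqrt (p ω * q ω) ∂P :=
    integral_congr_ae (Filter.Eventually.of_forall fun ω =>
      aux_right (p ω) (q ω) (hp0 ω) (hq0 ω))
  -- integrability of √(pq) via AM–GM
  have hsqint : Integrable (fun ω => Real.sqrt (p ω * q ω)) P := by
    refine Integrable.mono' (hpi.add hqi)
      ((hpc.mul hqc).sqrt.aestronglyMeasurable)
      (Filter.Eventually.of_forall fun ω => ?_)
    rw [Real.norm_of_nonneg (Real.sqrt_nonneg _), Real.sqrt_mul (hp0 ω).le]
    simp only [Pi.add_apply]
    nlinarith [sq_nonneg (Real.sqrt (p ω) - Real.sqrt (q ω)),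
      Real.sq_sqrt (hp0 ω).le, Real.sq_sqrt (hq0 ω).le,
      Real.sqrt_nonneg (p ω), Real.sqrt_nonneg (q ω)]
  have hIpos : 0 < ∫ ω, Real.sqrt (p ω * q ω) ∂P :=
    aux_pos_integral P hP _ (fun ω => Real.sqrt_pos.mpr (mul_pos (hp0 ω) (hq0 ω))) hsqint
  refine ⟨?_, by rw [e1, e2]; ring⟩
  intro φ hφ hφp hφq
  rw [e1, e2]
  set A := ∫ ω, Real.exp (-(φ ω)) * p ω ∂P with hA
  set B := ∫ ω, Real.exp (φ ω) * q ω ∂P with hB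
  have hApos : 0 < A :=
    aux_pos_integral P hP _ (fun ω => mul_pos (Real.exp_pos _) (hp0 ω)) hφp
  have hBpos : 0 < B :=
    aux_pos_integral P hP _ (fun ω => mul_pos (Real.exp_pos _) (hq0 ω)) hφq
  -- Cauchy–Schwarz
  set f : Ω → ℝ := fun ω => Real.sqrt (Real.exp (-(φ ω)) * p ω) with hf
  set g : Ω → ℝ := fun ω => Real.sqrt (Real.exp (φ ω) * q ω) with hg
  have hfm : AEStronglyMeasurable f P :=
    (((Real.measurable_exp.comp hφ.neg).mul hpc.measurable).sqrt).aestronglyMeasurable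
  have hgm : AEStronglyMeasurable g P :=
    (((Real.measurable_exp.comp hφ).mul hqc.measurable).sqrt).aestronglyMeasurable
  have hfsq : ∀ ω, f ω ^ (2:ℕ) = Real.exp (-(φ ω)) * p ω := fun ω =>
    Real.sq_sqrt (mul_pos (Real.exp_pos _) (hp0 ω)).le
  have hgsq : ∀ ω, g ω ^ (2:ℕ) = Real.exp (φ ω) * q ω := fun ω =>
    Real.sq_sqrt (mul_pos (Real.exp_pos _) (hq0 ω)).le
  have hfL2 : MemLp f (ENNReal.ofReal 2) P := by
    rw [show ENNReal.ofReal 2 = 2 by norm_num]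
    exact (memLp_two_iff_integrable_sq hfm).mpr
      (hφp.congr (Filter.Eventually.of_forall fun ω => (hfsq ω).symm))
  have hgL2 : MemLp g (ENNReal.ofReal 2) P := by
    rw [show ENNReal.ofReal 2 = 2 by norm_num]
    exact (memLp_two_iff_integrable_sq hgm).mpr
      (hφq.congr (Filter.Eventually.of_forall fun ω => (hgsq ω).symm))
  have hconj : (2:ℝ).HolderConjugate 2 := ⟨by norm_num, by norm_num, by norm_num⟩
  have hCS := integral_mul_le_Lp_mul_Lq_of_nonneg (f := f) (g := g) hconj
    (Filter.Eventually.of_forall fun ω => Real.sqrt_nonneg _)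
    (Filter.Eventually.of_forall fun ω => Real.sqrt_nonneg _) hfL2 hgL2
  have hfg : ∀ ω, f ω * g ω = Real.sqrt (p ω * q ω) := by
    intro ω
    rw [hf, hg, ← Real.sqrt_mul (mul_pos (Real.exp_pos _) (hp0 ω)).le]
    congr 1
    rw [Real.exp_neg]
    field_simp
  have hfg2 : ∀ ω, f ω ^ (2:ℝ) = Real.exp (-(φ ω)) * p ω := fun ω => by
    rw [show (2:ℝ) = ((2:ℕ):ℝ) by norm_num, Real.rpow_natCast]; exact hfsq ω
  have hgg2 : ∀ ω, g ω ^ (2:ℝ) = Real.exp (φ ω) * q ω := fun ω => by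
    rw [show (2:ℝ) = ((2:ℕ):ℝ) by norm_num, Real.rpow_natCast]; exact hgsq ω
  simp only [hfg, hfg2, hgg2] at hCS
  rw [← hA, ← hB] at hCS
  -- take logs
  have hlog : Real.log (∫ ω, Real.sqrt (p ω * q ω) ∂P)
      ≤ Real.log (A ^ ((1:ℝ)/2) * B ^ ((1:ℝ)/2)) :=
    Real.log_le_log hIpos hCS
  rw [Real.log_mul (by positivity) (by positivity),
    Real.log_rpow hApos, Real.log_rpow hBpos] at hlog
  linarith
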